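/- Fix reals a, b > 0 and m ∈ ℝ with m² ≥ 4(a + b). Let χ ∈ so(3, ℝ) be the matrix with entries χ₂₃ = 1, χ₃₂ = −1 and all other entries 0, and let J = diag(a, b, b). For M ∈ so(3, ℝ) let Ω(M) ∈ so(3, ℝ) be the unique skew-symmetric matrix with M = Ω(M)·J + J·Ω(M) (explicitly Ω(M)₁₂ = M₁₂/(a+b), Ω(M)₁₃ = M₁₃/(a+b), Ω(M)₂₃ = M₂₃/(2b)). Consider the Lagrange top equations Ṁ = [M, Ω(M)] + [Γ, χ], Γ̇ = [Γ, Ω(M)] for (M, Γ) ∈ so(3,ℝ) × so(3,ℝ). Then (M₀, Γ₀) = (m·χ, χ) is an equilibrium and it is Lyapunov stable: for every ε > 0 there exists δ > 0 such that every differentiable curve (M, Γ) : I → so(3,ℝ) × so(3,ℝ), defined on an interval I containing 0, satisfying the Lagrange top equations on I and ‖M(0) − M₀‖ + ‖Γ(0) − Γ₀‖ < δ, satisfies ‖M(t) − M₀‖ + ‖Γ(t) − Γ₀‖ < ε for all t ∈ I with t ≥ 0. -/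

import Mathlib

open Matrix

attribute [local instance] Matrix.normedAddCommGroup Matrix.normedSpace

/-- The matrix `χ ∈ so(3, ℝ)` with `χ₂₃ = 1`, `χ₃₂ = −1` and all other entries `0`. -/
def lagChi : Matrix (Fin 3) (Fin 3) ℝ := !![0, 0, 0; 0, 0, 1; 0, -1, 0]

/-- The angular velocity `Ω(M)` of the Lagrange top with inertia moments `a, b`:
the unique skew-symmetric matrix with `M = Ω(M)·J + J·Ω(M)`, `J = diag(a, b, b)`. -/
noncomputable def lagOmega (a b : ℝ) (M : Matrix (Fin 3) (Fin 3) ℝ) :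
    Matrix (Fin 3) (Fin 3) ℝ :=
  !![0, M 0 1 / (a + b), M 0 2 / (a + b);
     -(M 0 1 / (a + b)), 0, M 1 2 / (2 * b);
     -(M 0 2 / (a + b)), -(M 1 2 / (2 * b)), 0]

noncomputable def lagLam (a b m : ℝ) : ℝ := m / (2 * (a + b))
noncomputable def lagMu (a b m : ℝ) : ℝ := m ^ 2 / (4 * (a + b)) - 1 / 2
noncomputable def lagSig (a b m : ℝ) : ℝ := m ^ 2 / (8 * (a + b)) - 1 / 2
noncomputable def lagA (a b m : ℝ) : ℝ := (lagLam a b m) ^ 2 + 1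

/-- Energy–Casimir Lyapunov function (the sum-of-squares form). -/
noncomputable def lagW (a b m A : ℝ) (P Q : Matrix (Fin 3) (Fin 3) ℝ) : ℝ :=
  (1 / (2 * (a + b))) * ((P 0 1 - m / 2 * Q 0 1) ^ 2 + (P 0 2 - m / 2 * Q 0 2) ^ 2)
    + lagSig a b m * ((Q 0 1) ^ 2 + (Q 0 2) ^ 2)
    + (1 / (4 * b) + A) * (P 1 2 - m) ^ 2
    - lagLam a b m * (P 1 2 - m) * (Q 1 2 - 1)
    + lagMu a b m * (Q 1 2 - 1) ^ 2

noncomputable def lagL (a b m : ℝ)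
    (z : Matrix (Fin 3) (Fin 3) ℝ × Matrix (Fin 3) (Fin 3) ℝ) : ℝ :=
  lagW a b m (lagA a b m) z.1 z.2
    + |(z.2 0 1) ^ 2 + (z.2 0 2) ^ 2 + (z.2 1 2) ^ 2 - 1|

/-- `lagW` as a combination of the conserved quantities of the Lagrange top. -/
lemma lagW_eq (a b m A : ℝ) (hab : a + b ≠ 0) (hb : b ≠ 0)
    (P Q : Matrix (Fin 3) (Fin 3) ℝ) :
    lagW a b m A P Q =
      (((P 0 1) ^ 2 + (P 0 2) ^ 2) / (2 * (a + b)) + (P 1 2) ^ 2 / (4 * b) + Q 1 2)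
      - lagLam a b m * (P 0 1 * Q 0 1 + P 0 2 * Q 0 2 + P 1 2 * Q 1 2)
      + lagMu a b m * ((Q 0 1) ^ 2 + (Q 0 2) ^ 2 + (Q 1 2) ^ 2)
      + (lagLam a b m - m / (2 * b)) * P 1 2 + A * (P 1 2 - m) ^ 2
      + (-(1 / 2) - m ^ 2 / (4 * (a + b)) + m ^ 2 / (4 * b)) := by
  simp only [lagW, lagLam, lagMu, lagSig]
  field_simp
  ring

lemma lagW_lb (a b m : ℝ) (ha : 0 < a) (hb : 0 < b) (hm : m ^ 2 ≥ 4 * (a + b))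
    (P Q : Matrix (Fin 3) (Fin 3) ℝ) :
    (P 1 2 - m) ^ 2 + (1 / 4) * (Q 1 2 - 1) ^ 2
      + (1 / (2 * (a + b))) * ((P 0 1 - m / 2 * Q 0 1) ^ 2 + (P 0 2 - m / 2 * Q 0 2) ^ 2)
      ≤ lagW a b m (lagA a b m) P Q := by
  have hab : (0 : ℝ) < a + b := by linarith
  have hσ : 0 ≤ lagSig a b m := by
    simp only [lagSig]
    rw [ge_iff_le, ← sub_nonneg] at hm
    have : 0 < 8 * (a + b) := by linarith
    rw [sub_nonneg, le_div_iff₀ this]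
    nlinarith
  have hμ : (1 : ℝ) / 2 ≤ lagMu a b m := by
    simp only [lagMu]
    have : 0 < 4 * (a + b) := by linarith
    rw [le_sub_iff_add_le, le_div_iff₀ this]
    nlinarith
  simp only [lagW, lagA]
  have h1 : 0 ≤ (lagLam a b m * (P 1 2 - m) - (Q 1 2 - 1) / 2) ^ 2 := sq_nonneg _
  have h2 : 0 ≤ lagSig a b m * ((Q 0 1) ^ 2 + (Q 0 2) ^ 2) :=
    mul_nonneg hσ (add_nonneg (sq_nonneg _) (sq_nonneg _))
  have h3 : 0 ≤ (lagMu a b m - 1 / 2) * (Q 1 2 - 1) ^ 2 :=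
    mul_nonneg (by linarith) (sq_nonneg _)
  have h4 : 0 ≤ (1 / (4 * b)) * (P 1 2 - m) ^ 2 :=
    mul_nonneg (by positivity) (sq_nonneg _)
  nlinarith [h1, h2, h3, h4]

lemma skew_entries {P : Matrix (Fin 3) (Fin 3) ℝ} (h : Pᵀ = -P) :
    P 0 0 = 0 ∧ P 1 1 = 0 ∧ P 2 2 = 0 ∧
      P 1 0 = -P 0 1 ∧ P 2 0 = -P 0 2 ∧ P 2 1 = -P 1 2 := by
  refine ⟨?_, ?_, ?_, ?_, ?_, ?_⟩
  · have := congrFun (congrFun h 0) 0; simp at this; linarith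
  · have := congrFun (congrFun h 1) 1; simp at this; linarith
  · have := congrFun (congrFun h 2) 2; simp at this; linarith
  · have := congrFun (congrFun h 0) 1; simp at this; linarith
  · have := congrFun (congrFun h 0) 2; simp at this; linarith
  · have := congrFun (congrFun h 1) 2; simp at this; linarith

lemma const_of_deriv_zero {I : Set ℝ} (hI : I.OrdConnected) {f : ℝ → ℝ}
    (hf : ∀ u ∈ I, HasDerivWithinAt f 0 I u) {s t : ℝ} (hs : s ∈ I) (ht : t ∈ I) :
    f s = f t := by
  have h := Convex.norm_image_sub_le_of_norm_hasDerivWithin_le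
    (f' := fun _ => (0 : ℝ)) (C := 0) (fun x hx => hf x hx) (fun x _ => by simp)
    (convex_iff_ordConnected.mpr hI) ht hs
  rw [zero_mul] at h
  have := norm_nonneg (f s - f t)
  have : ‖f s - f t‖ = 0 := le_antisymm h this
  rwa [norm_eq_zero, sub_eq_zero] at this

lemma lagDerivs (a b : ℝ) {I : Set ℝ} {M Γ : ℝ → Matrix (Fin 3) (Fin 3) ℝ}
    (hskew : ∀ t ∈ I, (M t)ᵀ = -(M t) ∧ (Γ t)ᵀ = -(Γ t))
    (hM : ∀ t ∈ I, HasDerivWithinAt M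
      (M t * lagOmega a b (M t) - lagOmega a b (M t) * M t
        + (Γ t * lagChi - lagChi * Γ t)) I t)
    (hΓ : ∀ t ∈ I, HasDerivWithinAt Γ
      (Γ t * lagOmega a b (M t) - lagOmega a b (M t) * Γ t) I t)
    {u : ℝ} (hu : u ∈ I) :
    HasDerivWithinAt (fun s => M s 0 1)
      (M u 0 2 * M u 1 2 * (1 / (a + b)) - M u 0 2 * M u 1 2 * (1 / (2 * b)) - Γ u 0 2) I u ∧
    HasDerivWithinAt (fun s => M s 0 2)
      (-(M u 0 1 * M u 1 2 * (1 / (a + b))) + M u 0 1 * M u 1 2 * (1 / (2 * b)) + Γ u 0 1) I u ∧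
    HasDerivWithinAt (fun s => M s 1 2) 0 I u ∧
    HasDerivWithinAt (fun s => Γ s 0 1)
      (M u 0 2 * Γ u 1 2 * (1 / (a + b)) - M u 1 2 * Γ u 0 2 * (1 / (2 * b))) I u ∧
    HasDerivWithinAt (fun s => Γ s 0 2)
      (-(M u 0 1 * Γ u 1 2 * (1 / (a + b))) + M u 1 2 * Γ u 0 1 * (1 / (2 * b))) I u ∧
    HasDerivWithinAt (fun s => Γ s 1 2)
      ((M u 0 1 * Γ u 0 2 - M u 0 2 * Γ u 0 1) * (1 / (a + b))) I u := by
  obtain ⟨d0, d1, d2, e1, e2, e3⟩ := skew_entries (hskew u hu).1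
  obtain ⟨f0, f1, f2, g1, g2, g3⟩ := skew_entries (hskew u hu).2
  refine ⟨?_, ?_, ?_, ?_, ?_, ?_⟩
  · convert (hasDerivWithinAt_pi.mp ((hasDerivWithinAt_pi.mp (hM u hu)) 0)) 1 using 1
    · rfl
    · rfl
    simp [lagChi, lagOmega, Matrix.mul_apply, Fin.sum_univ_three, Matrix.vecHead,
      Matrix.vecTail, Matrix.vecMul, dotProduct, d0, d1, d2, e1, e2, e3,
      f0, f1, f2, g1, g2, g3]
    ring
  · convert (hasDerivWithinAt_pi.mp ((hasDerivWithinAt_pi.mp (hM u hu)) 0)) 2 using 1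
    · rfl
    · rfl
    simp [lagChi, lagOmega, Matrix.mul_apply, Fin.sum_univ_three, Matrix.vecHead,
      Matrix.vecTail, Matrix.vecMul, dotProduct, d0, d1, d2, e1, e2, e3,
      f0, f1, f2, g1, g2, g3]
    ring
  · convert (hasDerivWithinAt_pi.mp ((hasDerivWithinAt_pi.mp (hM u hu)) 1)) 2 using 1
    · rfl
    · rfl
    simp [lagChi, lagOmega, Matrix.mul_apply, Fin.sum_univ_three, Matrix.vecHead,
      Matrix.vecTail, Matrix.vecMul, dotProduct, d0, d1, d2, e1, e2, e3,
      f0, f1, f2, g1, g2, g3]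
    ring
  · convert (hasDerivWithinAt_pi.mp ((hasDerivWithinAt_pi.mp (hΓ u hu)) 0)) 1 using 1
    · rfl
    · rfl
    simp [lagChi, lagOmega, Matrix.mul_apply, Fin.sum_univ_three, Matrix.vecHead,
      Matrix.vecTail, Matrix.vecMul, dotProduct, d0, d1, d2, e1, e2, e3,
      f0, f1, f2, g1, g2, g3]
    ring
  · convert (hasDerivWithinAt_pi.mp ((hasDerivWithinAt_pi.mp (hΓ u hu)) 0)) 2 using 1
    · rfl
    · rfl
    simp [lagChi, lagOmega, Matrix.mul_apply, Fin.sum_univ_three, Matrix.vecHead,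
      Matrix.vecTail, Matrix.vecMul, dotProduct, d0, d1, d2, e1, e2, e3,
      f0, f1, f2, g1, g2, g3]
    ring
  · convert (hasDerivWithinAt_pi.mp ((hasDerivWithinAt_pi.mp (hΓ u hu)) 1)) 2 using 1
    · rfl
    · rfl
    simp [lagChi, lagOmega, Matrix.mul_apply, Fin.sum_univ_three, Matrix.vecHead,
      Matrix.vecTail, Matrix.vecMul, dotProduct, d0, d1, d2, e1, e2, e3,
      f0, f1, f2, g1, g2, g3]
    ring

lemma lagConserved (a b : ℝ) (ha : 0 < a) (hb : 0 < b) {I : Set ℝ}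
    (hI : I.OrdConnected) {M Γ : ℝ → Matrix (Fin 3) (Fin 3) ℝ}
    (hskew : ∀ t ∈ I, (M t)ᵀ = -(M t) ∧ (Γ t)ᵀ = -(Γ t))
    (hM : ∀ t ∈ I, HasDerivWithinAt M
      (M t * lagOmega a b (M t) - lagOmega a b (M t) * M t
        + (Γ t * lagChi - lagChi * Γ t)) I t)
    (hΓ : ∀ t ∈ I, HasDerivWithinAt Γ
      (Γ t * lagOmega a b (M t) - lagOmega a b (M t) * Γ t) I t)
    {s t : ℝ} (hs : s ∈ I) (ht : t ∈ I) :
    M s 1 2 = M t 1 2 ∧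
    (Γ s 0 1) ^ 2 + (Γ s 0 2) ^ 2 + (Γ s 1 2) ^ 2
      = (Γ t 0 1) ^ 2 + (Γ t 0 2) ^ 2 + (Γ t 1 2) ^ 2 ∧
    M s 0 1 * Γ s 0 1 + M s 0 2 * Γ s 0 2 + M s 1 2 * Γ s 1 2
      = M t 0 1 * Γ t 0 1 + M t 0 2 * Γ t 0 2 + M t 1 2 * Γ t 1 2 ∧
    ((M s 0 1) ^ 2 + (M s 0 2) ^ 2) / (2 * (a + b)) + (M s 1 2) ^ 2 / (4 * b) + Γ s 1 2
      = ((M t 0 1) ^ 2 + (M t 0 2) ^ 2) / (2 * (a + b)) + (M t 1 2) ^ 2 / (4 * b) + Γ t 1 2 := by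
  have hab : a + b ≠ 0 := by positivity
  have hbne : b ≠ 0 := ne_of_gt hb
  refine ⟨?_, ?_, ?_, ?_⟩
  · exact const_of_deriv_zero hI
      (fun u hu => (lagDerivs a b hskew hM hΓ hu).2.2.1) hs ht
  · refine const_of_deriv_zero (f := fun u => (Γ u 0 1) ^ 2 + (Γ u 0 2) ^ 2 + (Γ u 1 2) ^ 2)
      hI (fun u hu => ?_) hs ht
    obtain ⟨h1, h2, h3, h4, h5, h6⟩ := lagDerivs a b hskew hM hΓ hu
    have h := ((h4.pow 2).add (h5.pow 2)).add (h6.pow 2)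
    convert h using 1
    · rfl
    · rfl
    · rfl
    field_simp
    ring
  · refine const_of_deriv_zero
      (f := fun u => M u 0 1 * Γ u 0 1 + M u 0 2 * Γ u 0 2 + M u 1 2 * Γ u 1 2)
      hI (fun u hu => ?_) hs ht
    obtain ⟨h1, h2, h3, h4, h5, h6⟩ := lagDerivs a b hskew hM hΓ hu
    have h := ((h1.mul h4).add (h2.mul h5)).add (h3.mul h6)
    convert h using 1
    · rfl
    · rfl
    · rfl
    field_simp
    ring
  · refine const_of_deriv_zero
      (f := fun u => ((M u 0 1) ^ 2 + (M u 0 2) ^ 2) / (2 * (a + b))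
        + (M u 1 2) ^ 2 / (4 * b) + Γ u 1 2)
      hI (fun u hu => ?_) hs ht
    obtain ⟨h1, h2, h3, h4, h5, h6⟩ := lagDerivs a b hskew hM hΓ hu
    have h := ((((h1.pow 2).add (h2.pow 2)).div_const (2 * (a + b))).add
      ((h3.pow 2).div_const (4 * b))).add h6
    convert h using 1
    · rfl
    · rfl
    · rfl
    field_simp
    ring

lemma lagL_zero (a b m : ℝ) : lagL a b m (m • lagChi, lagChi) = 0 := by
  have h1 : (m • lagChi) 0 1 = 0 := by simp [lagChi]
  have h2 : (m • lagChi) 0 2 = 0 := by simp [lagChi]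
  have h3 : (m • lagChi) 1 2 = m := by simp [lagChi]
  have g1 : lagChi 0 1 = 0 := by simp [lagChi]
  have g2 : lagChi 0 2 = 0 := by simp [lagChi]
  have g3 : lagChi 1 2 = 1 := by simp [lagChi]
  simp [lagL, lagW, h1, h2, h3, g1, g2, g3]

lemma lagL_continuous (a b m : ℝ) : Continuous (lagL a b m) := by
  have hE1 : ∀ i j : Fin 3,
      Continuous (fun z : Matrix (Fin 3) (Fin 3) ℝ × Matrix (Fin 3) (Fin 3) ℝ => z.1 i j) :=
    fun i j => (continuous_apply j).comp ((continuous_apply i).comp continuous_fst)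
  have hE2 : ∀ i j : Fin 3,
      Continuous (fun z : Matrix (Fin 3) (Fin 3) ℝ × Matrix (Fin 3) (Fin 3) ℝ => z.2 i j) :=
    fun i j => (continuous_apply j).comp ((continuous_apply i).comp continuous_snd)
  unfold lagL lagW
  fun_prop

set_option maxHeartbeats 2000000 in
/-- The sleeping Lagrange top `(M₀, Γ₀) = (m·χ, χ)` with
`m² ≥ 4(a + b)` is an equilibrium of the Lagrange top equations
`Ṁ = [M, Ω(M)] + [Γ, χ]`, `Γ̇ = [Γ, Ω(M)]`, and it is Lyapunov stable. -/
theorem statement10 (a b m : ℝ) (ha : 0 < a) (hb : 0 < b)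
    (hm : m ^ 2 ≥ 4 * (a + b)) :
    (m • lagChi * lagOmega a b (m • lagChi) - lagOmega a b (m • lagChi) * (m • lagChi)
        + (lagChi * lagChi - lagChi * lagChi) = 0 ∧
      lagChi * lagOmega a b (m • lagChi) - lagOmega a b (m • lagChi) * lagChi = 0) ∧
      ∀ ε > (0 : ℝ), ∃ δ > (0 : ℝ),
        ∀ (I : Set ℝ) (M Γ : ℝ → Matrix (Fin 3) (Fin 3) ℝ),
          I.OrdConnected → (0 : ℝ) ∈ I →
          (∀ t ∈ I, (M t)ᵀ = -(M t) ∧ (Γ t)ᵀ = -(Γ t)) →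
          (∀ t ∈ I, HasDerivWithinAt M
            (M t * lagOmega a b (M t) - lagOmega a b (M t) * M t
              + (Γ t * lagChi - lagChi * Γ t)) I t) →
          (∀ t ∈ I, HasDerivWithinAt Γ
            (Γ t * lagOmega a b (M t) - lagOmega a b (M t) * Γ t) I t) →
          ‖M 0 - m • lagChi‖ + ‖Γ 0 - lagChi‖ < δ →
          ∀ t ∈ I, 0 ≤ t → ‖M t - m • lagChi‖ + ‖Γ t - lagChi‖ < ε := by
  have hab : (0 : ℝ) < a + b := by linarith
  have hab' : a + b ≠ 0 := ne_of_gt hab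
  have hb' : b ≠ 0 := ne_of_gt hb
  constructor
  · constructor <;>
    · ext i j
      fin_cases i <;> fin_cases j <;>
        simp [lagChi, lagOmega, Matrix.mul_apply, Fin.sum_univ_three, Matrix.smul_apply,
          smul_eq_mul, Matrix.vecHead, Matrix.vecTail] <;> ring
  intro ε hε
  set K : Set (Matrix (Fin 3) (Fin 3) ℝ × Matrix (Fin 3) (Fin 3) ℝ) :=
    {z | (z.1ᵀ = -z.1 ∧ z.2ᵀ = -z.2) ∧ ‖z.1 - m • lagChi‖ + ‖z.2 - lagChi‖ = ε / 2} with hK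
  have hKclosed : IsClosed K := by
    have h1 : IsClosed {z : Matrix (Fin 3) (Fin 3) ℝ × Matrix (Fin 3) (Fin 3) ℝ |
        z.1ᵀ = -z.1} := isClosed_eq continuous_fst.matrix_transpose continuous_fst.neg
    have h2 : IsClosed {z : Matrix (Fin 3) (Fin 3) ℝ × Matrix (Fin 3) (Fin 3) ℝ |
        z.2ᵀ = -z.2} := isClosed_eq continuous_snd.matrix_transpose continuous_snd.neg
    have h3 : IsClosed {z : Matrix (Fin 3) (Fin 3) ℝ × Matrix (Fin 3) (Fin 3) ℝ |
        ‖z.1 - m • lagChi‖ + ‖z.2 - lagChi‖ = ε / 2} :=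
      isClosed_eq (((continuous_fst.sub continuous_const).norm).add
        ((continuous_snd.sub continuous_const).norm)) continuous_const
    exact (h1.inter h2).inter h3
  have hKsub : K ⊆ Metric.closedBall (m • lagChi, lagChi) (ε / 2) := by
    intro z hz
    rw [Metric.mem_closedBall, Prod.dist_eq]
    have hn1 : (0 : ℝ) ≤ ‖z.1 - m • lagChi‖ := norm_nonneg _
    have hn2 : (0 : ℝ) ≤ ‖z.2 - lagChi‖ := norm_nonneg _
    have he := hz.2
    refine max_le ?_ ?_
    · rw [show ((m • lagChi, lagChi) : _ × _).1 = m • lagChi from rfl, dist_eq_norm]; linarith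
    · rw [show ((m • lagChi, lagChi) : _ × _).2 = lagChi from rfl, dist_eq_norm]; linarith
  have hKcomp : IsCompact K :=
    (isCompact_closedBall (m • lagChi, lagChi) (ε / 2)).of_isClosed_subset hKclosed hKsub
  have hKpos : ∀ z ∈ K, 0 < lagL a b m z := by
    rintro z ⟨⟨hz1, hz2⟩, hzn⟩
    have hWlb := lagW_lb a b m ha hb hm z.1 z.2
    have habs : (0 : ℝ) ≤ |(z.2 0 1) ^ 2 + (z.2 0 2) ^ 2 + (z.2 1 2) ^ 2 - 1| := abs_nonneg _
    have hlb0 : (0 : ℝ) ≤ (z.1 1 2 - m) ^ 2 + (1 / 4) * (z.2 1 2 - 1) ^ 2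
        + (1 / (2 * (a + b))) * ((z.1 0 1 - m / 2 * z.2 0 1) ^ 2
          + (z.1 0 2 - m / 2 * z.2 0 2) ^ 2) := by positivity
    have hL0 : 0 ≤ lagL a b m z := by simp only [lagL]; linarith
    rcases eq_or_lt_of_le hL0 with h | h
    · exfalso
      have hW0 : lagW a b m (lagA a b m) z.1 z.2 = 0 := by
        simp only [lagL] at h; linarith
      have habs0 : |(z.2 0 1) ^ 2 + (z.2 0 2) ^ 2 + (z.2 1 2) ^ 2 - 1| = 0 := by
        simp only [lagL] at h; linarith
      rw [abs_eq_zero] at habs0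
      have hia : (0 : ℝ) < 1 / (2 * (a + b)) := by positivity
      have q3 : z.1 1 2 = m := by
        have hle : (z.1 1 2 - m) ^ 2 ≤ 0 := by
          nlinarith [sq_nonneg (z.2 1 2 - 1), sq_nonneg (z.1 0 1 - m / 2 * z.2 0 1), sq_nonneg (z.1 0 2 - m / 2 * z.2 0 2),
          mul_nonneg hia.le (add_nonneg (sq_nonneg (z.1 0 1 - m / 2 * z.2 0 1))
            (sq_nonneg (z.1 0 2 - m / 2 * z.2 0 2)))]
        have := (pow_eq_zero_iff two_ne_zero).mp (le_antisymm hle (sq_nonneg _))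
        linarith
      have y3 : z.2 1 2 = 1 := by
        have hle : (z.2 1 2 - 1) ^ 2 ≤ 0 := by
          nlinarith [sq_nonneg (z.1 1 2 - m), mul_nonneg hia.le (add_nonneg (sq_nonneg (z.1 0 1 - m / 2 * z.2 0 1))
            (sq_nonneg (z.1 0 2 - m / 2 * z.2 0 2)))]
        have := (pow_eq_zero_iff two_ne_zero).mp (le_antisymm hle (sq_nonneg _))
        linarith
      have y1 : z.2 0 1 = 0 := by
        have hle : (z.2 0 1) ^ 2 ≤ 0 := by
          nlinarith [sq_nonneg (z.2 0 2)]
        exact (pow_eq_zero_iff two_ne_zero).mp (le_antisymm hle (sq_nonneg _))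
      have y2 : z.2 0 2 = 0 := by
        have hle : (z.2 0 2) ^ 2 ≤ 0 := by
          nlinarith [sq_nonneg (z.2 0 1)]
        exact (pow_eq_zero_iff two_ne_zero).mp (le_antisymm hle (sq_nonneg _))
      have hp12 : (z.1 0 1 - m / 2 * z.2 0 1) ^ 2 + (z.1 0 2 - m / 2 * z.2 0 2) ^ 2 ≤ 0 := by
        nlinarith [sq_nonneg (z.1 1 2 - m), sq_nonneg (z.2 1 2 - 1)]
      have q1 : z.1 0 1 = 0 := by
        have hle : (z.1 0 1 - m / 2 * z.2 0 1) ^ 2 ≤ 0 := by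
          nlinarith [sq_nonneg (z.1 0 2 - m / 2 * z.2 0 2)]
        have := (pow_eq_zero_iff two_ne_zero).mp (le_antisymm hle (sq_nonneg _))
        rw [y1] at this; linarith
      have q2 : z.1 0 2 = 0 := by
        have hle : (z.1 0 2 - m / 2 * z.2 0 2) ^ 2 ≤ 0 := by
          nlinarith [sq_nonneg (z.1 0 1 - m / 2 * z.2 0 1)]
        have := (pow_eq_zero_iff two_ne_zero).mp (le_antisymm hle (sq_nonneg _))
        rw [y2] at this; linarith
      obtain ⟨d0, d1, d2, e1, e2, e3⟩ := skew_entries hz1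
      obtain ⟨f0, f1, f2, g1, g2, g3⟩ := skew_entries hz2
      have hz1E : z.1 = m • lagChi := by
        ext i j
        fin_cases i <;> fin_cases j <;>
          simp [lagChi, Matrix.smul_apply, smul_eq_mul, Matrix.vecHead, Matrix.vecTail,
            d0, d1, d2, e1, e2, e3, q1, q2, q3]
      have hz2E : z.2 = lagChi := by
        ext i j
        fin_cases i <;> fin_cases j <;>
          simp [lagChi, Matrix.vecHead, Matrix.vecTail,
            f0, f1, f2, g1, g2, g3, y1, y2, y3]
      rw [hz1E, hz2E, sub_self, sub_self, norm_zero] at hzn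
      linarith
    · exact h
  obtain ⟨ℓ, hℓpos, hℓ⟩ : ∃ ℓ, 0 < ℓ ∧ ∀ z ∈ K, ℓ ≤ lagL a b m z := by
    rcases K.eq_empty_or_nonempty with hKe | hKne
    · exact ⟨1, one_pos, fun z hz => absurd (hKe ▸ hz) (Set.notMem_empty z)⟩
    · obtain ⟨z0, hz0K, hmin⟩ := hKcomp.exists_isMinOn hKne (lagL_continuous a b m).continuousOn
      exact ⟨lagL a b m z0, hKpos z0 hz0K, fun z hz => hmin hz⟩
  obtain ⟨δ₁, hδ₁pos, hδ₁⟩ : ∃ δ₁ > 0,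
      ∀ z, dist z ((m • lagChi, lagChi) : _ × _) < δ₁ → lagL a b m z < ℓ := by
    have hc := (lagL_continuous a b m).continuousAt
      (x := ((m • lagChi, lagChi) : Matrix (Fin 3) (Fin 3) ℝ × Matrix (Fin 3) (Fin 3) ℝ))
    replace hc := Metric.continuousAt_iff.mp hc
    obtain ⟨δ₁, hp, h⟩ := hc ℓ hℓpos
    refine ⟨δ₁, hp, fun z hz => ?_⟩
    have h2 := h hz
    rw [lagL_zero, Real.dist_eq, sub_zero] at h2
    exact lt_of_le_of_lt (le_abs_self _) h2
  refine ⟨min δ₁ (ε / 2), by positivity, ?_⟩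
  intro I M Γ hI h0I hskew hM hΓ hinit t htI ht0
  have hIcc : Set.Icc (0 : ℝ) t ⊆ I := hI.out h0I htI
  have hLcons : ∀ s ∈ I, lagL a b m (M s, Γ s) = lagL a b m (M 0, Γ 0) := by
    intro s hs
    obtain ⟨hc3, hc1, hc2, hcH⟩ := lagConserved a b ha hb hI hskew hM hΓ hs h0I
    simp only [lagL]
    rw [hc1]
    congr 1
    rw [lagW_eq a b m _ hab' hb', lagW_eq a b m _ hab' hb']
    linear_combination hcH - lagLam a b m * hc2 + lagMu a b m * hc1
      + (lagLam a b m - m / (2 * b) + lagA a b m * (M s 1 2 + M 0 1 2 - 2 * m)) * hc3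
  have hL0small : lagL a b m (M 0, Γ 0) < ℓ := by
    apply hδ₁
    rw [Prod.dist_eq]
    have hn1 : (0 : ℝ) ≤ ‖M 0 - m • lagChi‖ := norm_nonneg _
    have hn2 : (0 : ℝ) ≤ ‖Γ 0 - lagChi‖ := norm_nonneg _
    have hδle : min δ₁ (ε / 2) ≤ δ₁ := min_le_left _ _
    refine lt_of_le_of_lt (max_le ?_ ?_) (lt_of_lt_of_le hinit hδle)
    · rw [show ((m • lagChi, lagChi) : _ × _).1 = m • lagChi from rfl, dist_eq_norm]; linarith
    · rw [show ((m • lagChi, lagChi) : _ × _).2 = lagChi from rfl, dist_eq_norm]; linarith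
  by_contra hcon
  push_neg at hcon
  have hncont : ContinuousOn (fun s => ‖M s - m • lagChi‖ + ‖Γ s - lagChi‖) (Set.Icc 0 t) := by
    have hMc : ContinuousOn M I := fun u hu => (hM u hu).continuousWithinAt
    have hΓc : ContinuousOn Γ I := fun u hu => (hΓ u hu).continuousWithinAt
    exact (((hMc.sub continuousOn_const).norm).add
      ((hΓc.sub continuousOn_const).norm)).mono hIcc
  have hmem : ε / 2 ∈ Set.Icc (‖M 0 - m • lagChi‖ + ‖Γ 0 - lagChi‖)
      (‖M t - m • lagChi‖ + ‖Γ t - lagChi‖) := by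
    constructor
    · exact le_of_lt (lt_of_lt_of_le hinit (min_le_right _ _))
    · linarith
  obtain ⟨s, hsIcc, hns⟩ := intermediate_value_Icc ht0 hncont hmem
  have hsI : s ∈ I := hIcc hsIcc
  have hzK : (M s, Γ s) ∈ K := ⟨⟨(hskew s hsI).1, (hskew s hsI).2⟩, hns⟩
  have hge := hℓ _ hzK
  rw [hLcons s hsI] at hge
  linarith
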